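/- Let δ ∈ (0,1) and let G be a simple graph on n vertices with minimal degree at least δn, with P the transition matrix of the simple random walk on G and eigenvalues 1 = λ₁ ≥ λ₂ ≥ … ≥ λₙ ≥ −1. Then every diagonal entry of P² is at most 1/(δn), hence the trace of P² is at most 1/δ, and consequently the number of indices i with λᵢ > 1/2 is at most 4/δ. -/

import Mathlib

open scoped Classical

noncomputable section

namespace Paper

variable {V : Type} [Fintype V] [DecidableEq V]

/-- The degree of a vertex `v` in a simple graph `G`. -/
def deg (G : SimpleGraph V) (v : V) : ℕ := Nat.card {u | G.Adj v u}

/-- The transition matrix of the simple random walk on `G`. -/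
def transMat (G : SimpleGraph V) : Matrix V V ℝ :=
  fun v u => if G.Adj v u then (deg G v : ℝ)⁻¹ else 0

open Polynomial Matrix

lemma charpoly_conj_eq (N N' M : Matrix V V ℝ) (h : N * N' = 1) (h' : N' * N = 1) :
    (N * M * N').charpoly = M.charpoly := by
  have hC : ∀ A B : Matrix V V ℝ, (A * B).map (C : ℝ →+* ℝ[X]) = A.map C * B.map C := by
    intro A B; exact Matrix.map_mul
  have hcomm : ∀ A : Matrix V V ℝ, A.map (C : ℝ →+* ℝ[X]) * scalar V X
      = scalar V X * A.map C := fun A =>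
    (Matrix.scalar_commute X (fun r' => Commute.all X r') (A.map C)).symm
  have key : charmatrix (N * M * N') = N.map C * charmatrix M * N'.map C := by
    rw [charmatrix, charmatrix, mul_sub, sub_mul]
    congr 1
    · rw [hcomm, mul_assoc, ← hC, h, Matrix.map_one _ (map_zero _) (map_one _),
        Matrix.mul_one]
    · simp only [RingHom.mapMatrix_apply]
      rw [← hC, ← hC]
  rw [Matrix.charpoly, key, det_mul, det_mul, mul_comm, ← mul_assoc, ← det_mul, ← hC, h',
    Matrix.map_one _ (map_zero _) (map_one _), det_one, one_mul, Matrix.charpoly]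

lemma charpoly_diagonal (d : V → ℝ) :
    (Matrix.diagonal d).charpoly = ∏ v : V, (X - C (d v)) := by
  have : charmatrix (Matrix.diagonal d) = Matrix.diagonal (fun v => X - C (d v)) := by
    rw [charmatrix, RingHom.mapMatrix_apply, Matrix.diagonal_map (map_zero _), scalar_apply,
      ← diagonal_sub]
  rw [Matrix.charpoly, this, det_diagonal]

lemma deg_eq_card (G : SimpleGraph V) (v : V) :
    deg G v = (Finset.univ.filter (fun u => G.Adj v u)).card := by
  rw [deg, Nat.card_eq_fintype_card]
  exact Fintype.card_subtype _

/-- Let `G` be a simple graph on `n` vertices with minimal degree at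
least `δn`, let `P` be the transition matrix of the simple random walk on `G`, and let
`lam : Fin n → ℝ` enumerate the eigenvalues of `P` (with multiplicity, in nonincreasing
order, all lying in `[-1,1]`; enumeration with multiplicity is expressed through the
factorization of the characteristic polynomial).  Then every diagonal entry of `P²` is
at most `1/(δn)`, the trace of `P²` is at most `1/δ`, and the number of indices `i` with
`λᵢ > 1/2` is at most `4/δ`. -/
theorem trace_sq_eigenvalue_bound (δ : ℝ) (hδ0 : 0 < δ) (hδ1 : δ < 1)
    (G : SimpleGraph V)
    (hdeg : ∀ v : V, δ * (Fintype.card V : ℝ) ≤ (deg G v : ℝ))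
    (lam : Fin (Fintype.card V) → ℝ)
    (hmono : Antitone lam)
    (hub : ∀ i, lam i ≤ 1) (hlb : ∀ i, -1 ≤ lam i)
    (hchar : (transMat G).charpoly =
      ∏ i : Fin (Fintype.card V), (Polynomial.X - Polynomial.C (lam i))) :
    (∀ v : V, ((transMat G ^ 2) v v : ℝ) ≤ 1 / (δ * (Fintype.card V : ℝ))) ∧
    Matrix.trace (transMat G ^ 2) ≤ 1 / δ ∧
    (Nat.card {i : Fin (Fintype.card V) | 1 / 2 < lam i} : ℝ) ≤ 4 / δ := by
  by_cases hV : IsEmpty V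
  · have hc0 : Fintype.card V = 0 := Fintype.card_eq_zero
    refine ⟨fun v => (hV.false v).elim, ?_, ?_⟩
    · rw [Matrix.trace]
      rw [Finset.univ_eq_empty, Finset.sum_empty]
      positivity
    · haveI : IsEmpty (Fin (Fintype.card V)) := by rw [hc0]; exact Fin.isEmpty'
      rw [Nat.card_of_isEmpty]
      norm_num
      positivity
  haveI : Nonempty V := not_isEmpty_iff.mp hV
  have hnpos : (0 : ℝ) < (Fintype.card V : ℝ) := by
    exact_mod_cast Fintype.card_pos
  have hδn : (0:ℝ) < δ * (Fintype.card V : ℝ) := by positivity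
  have degpos : ∀ v, (0:ℝ) < (deg G v : ℝ) := fun v => lt_of_lt_of_le hδn (hdeg v)
  -- row sums equal 1
  have hrow : ∀ v, ∑ u, transMat G v u = 1 := by
    intro v
    have : ∑ u, transMat G v u
        = ∑ u ∈ Finset.univ.filter (fun u => G.Adj v u), (deg G v : ℝ)⁻¹ := by
      rw [Finset.sum_filter]
      rfl
    rw [this, Finset.sum_const, ← deg_eq_card, nsmul_eq_mul, mul_inv_cancel₀ (degpos v).ne']
  have hnonneg : ∀ v u, 0 ≤ transMat G v u := by
    intro v u
    by_cases h : G.Adj v u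
    · simp only [transMat, h, if_true]
      positivity
    · simp [transMat, h]
  have hentry : ∀ v u, transMat G v u ≤ 1 / (δ * (Fintype.card V : ℝ)) := by
    intro v u
    by_cases h : G.Adj v u
    · simp only [transMat, h, if_true, one_div]
      exact inv_anti₀ hδn (hdeg v)
    · simp only [transMat, h, if_false, one_div]
      positivity
  -- Part 1
  have part1 : ∀ v : V, ((transMat G ^ 2) v v : ℝ) ≤ 1 / (δ * (Fintype.card V : ℝ)) := by
    intro v
    have hsq : (transMat G ^ 2) v v = ∑ u, transMat G v u * transMat G u v := by
      rw [pow_two, Matrix.mul_apply]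
    rw [hsq]
    calc ∑ u, transMat G v u * transMat G u v
        ≤ ∑ u, transMat G v u * (1 / (δ * (Fintype.card V : ℝ))) := by
          refine Finset.sum_le_sum fun u _ => ?_
          exact mul_le_mul_of_nonneg_left (hentry u v) (hnonneg v u)
      _ = 1 / (δ * (Fintype.card V : ℝ)) := by
          rw [← Finset.sum_mul, hrow, one_mul]
  -- Part 2
  have part2 : Matrix.trace (transMat G ^ 2) ≤ 1 / δ := by
    rw [Matrix.trace]
    calc ∑ v, (transMat G ^ 2).diag v ≤ ∑ _v : V, 1 / (δ * (Fintype.card V : ℝ)) :=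
          Finset.sum_le_sum fun v _ => part1 v
      _ = 1 / δ := by
          rw [Finset.sum_const, nsmul_eq_mul]
          field_simp
          rw [Finset.card_univ]
  refine ⟨part1, part2, ?_⟩
  -- Part 3: trace (P^2) = ∑ lam i ^ 2 via symmetrization
  set P := transMat G with hP
  set d : V → ℝ := fun v => Real.sqrt (deg G v) with hd
  have hdpos : ∀ v, 0 < d v := fun v => Real.sqrt_pos.mpr (degpos v)
  set D : Matrix V V ℝ := Matrix.diagonal d with hD
  set D' : Matrix V V ℝ := Matrix.diagonal (fun v => (d v)⁻¹) with hD'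
  have hmul1 : ∀ v, d v * (d v)⁻¹ = 1 := fun v => mul_inv_cancel₀ (hdpos v).ne'
  have hmul2 : ∀ v, (d v)⁻¹ * d v = 1 := fun v => inv_mul_cancel₀ (hdpos v).ne'
  have hDD' : D * D' = 1 := by
    rw [hD, hD', diagonal_mul_diagonal]
    simp [hmul1]
  have hD'D : D' * D = 1 := by
    rw [hD', hD, diagonal_mul_diagonal]
    simp [hmul2]
  set S : Matrix V V ℝ := D * P * D' with hS
  have hdinv : ∀ v, d v * ((deg G v : ℝ))⁻¹ = (d v)⁻¹ := by
    intro v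
    have h1 : (deg G v : ℝ) = d v * d v := (Real.mul_self_sqrt (degpos v).le).symm
    rw [h1, mul_inv, ← mul_assoc, mul_inv_cancel₀ (hdpos v).ne', one_mul]
  have hSentry : ∀ i j, S i j = if G.Adj i j then (d i)⁻¹ * (d j)⁻¹ else 0 := by
    intro i j
    rw [hS, Matrix.mul_diagonal, Matrix.diagonal_mul, hP]
    simp only [transMat]
    by_cases h : G.Adj i j
    · rw [if_pos h, if_pos h, ← hdinv i]
    · rw [if_neg h, if_neg h, mul_zero, zero_mul]
  have hSym : S.IsHermitian := by
    rw [Matrix.IsHermitian]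
    ext i j
    rw [Matrix.conjTranspose_apply, star_trivial, hSentry, hSentry]
    by_cases h : G.Adj i j
    · rw [if_pos h, if_pos (G.adj_symm h), mul_comm]
    · rw [if_neg h, if_neg (fun h' => h (G.adj_symm h'))]
  have hcharS : S.charpoly = P.charpoly := charpoly_conj_eq D D' P hDD' hD'D
  -- spectral theorem
  set U : Matrix V V ℝ := (hSym.eigenvectorUnitary : Matrix V V ℝ) with hU
  set ε : V → ℝ := hSym.eigenvalues with hε
  have hspec : S = U * Matrix.diagonal ε * star U := by
    have := hSym.spectral_theorem
    rwa [RCLike.ofReal_real_eq_id, Function.id_comp] at this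
  have hU1 : U * star U = 1 :=
    Matrix.mem_unitaryGroup_iff.mp hSym.eigenvectorUnitary.prop
  have hU2 : star U * U = 1 :=
    Matrix.mem_unitaryGroup_iff'.mp hSym.eigenvectorUnitary.prop
  have hcharD : S.charpoly = ∏ v : V, (X - C (ε v)) := by
    rw [hspec, charpoly_conj_eq U (star U) _ hU1 hU2, charpoly_diagonal]
  have hprod : ∏ i : Fin (Fintype.card V), (X - C (lam i)) = ∏ v : V, (X - C (ε v)) := by
    rw [← hchar, ← hcharS, hcharD]
  -- multiset of roots
  have hms : Finset.univ.val.map lam = Finset.univ.val.map ε := by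
    have h1 : (Finset.univ.val.map lam) =
        ((Finset.univ.val.map lam).map (fun a : ℝ => X - C a)).prod.roots :=
      (roots_multiset_prod_X_sub_C _).symm
    have h2 : (Finset.univ.val.map ε) =
        ((Finset.univ.val.map ε).map (fun a : ℝ => X - C a)).prod.roots :=
      (roots_multiset_prod_X_sub_C _).symm
    rw [h1, h2, Multiset.map_map, Multiset.map_map]
    congr 1
  have hsumsq : ∑ i : Fin (Fintype.card V), (lam i)^2 = ∑ v : V, (ε v)^2 := by
    have := congrArg (fun m : Multiset ℝ => (m.map (fun x : ℝ => x^2)).sum) hms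
    simp only [Multiset.map_map, Function.comp] at this
    exact this
  -- trace identities
  have htr1 : Matrix.trace (P ^ 2) = Matrix.trace (S ^ 2) := by
    have : S ^ 2 = D * P ^ 2 * D' := by
      rw [pow_two, pow_two, hS]
      calc D * P * D' * (D * P * D') = D * P * (D' * D) * P * D' := by
            simp only [Matrix.mul_assoc]
        _ = D * (P * P) * D' := by rw [hD'D]; simp only [Matrix.mul_one, Matrix.mul_assoc]
    rw [this, Matrix.trace_mul_comm, ← Matrix.mul_assoc, hD'D, Matrix.one_mul]
  have htr2 : Matrix.trace (S ^ 2) = ∑ v : V, (ε v)^2 := by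
    have : S ^ 2 = U * (Matrix.diagonal ε * Matrix.diagonal ε) * star U := by
      rw [pow_two, hspec]
      calc U * Matrix.diagonal ε * star U * (U * Matrix.diagonal ε * star U)
          = U * Matrix.diagonal ε * (star U * U) * Matrix.diagonal ε * star U := by
            simp only [Matrix.mul_assoc]
        _ = U * (Matrix.diagonal ε * Matrix.diagonal ε) * star U := by
            rw [hU2]; simp only [Matrix.mul_one, Matrix.mul_assoc]
    rw [this, Matrix.trace_mul_comm, ← Matrix.mul_assoc, hU2, Matrix.one_mul,
      diagonal_mul_diagonal, Matrix.trace_diagonal]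
    exact Finset.sum_congr rfl fun v _ => (sq (ε v)).symm ▸ rfl
  have htrace : Matrix.trace (P ^ 2) = ∑ i : Fin (Fintype.card V), (lam i)^2 := by
    rw [htr1, htr2, hsumsq]
  -- counting
  set T := Finset.univ.filter (fun i : Fin (Fintype.card V) => 1/2 < lam i) with hT
  have hcard : (Nat.card {i : Fin (Fintype.card V) | 1 / 2 < lam i} : ℝ) = (T.card : ℝ) := by
    rw [Nat.card_eq_fintype_card]
    norm_cast
    exact Fintype.card_subtype _
  have hquarter : (T.card : ℝ) * (1/4) ≤ ∑ i : Fin (Fintype.card V), (lam i)^2 := by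
    calc (T.card : ℝ) * (1/4) = ∑ _i ∈ T, (1/4 : ℝ) := by
          rw [Finset.sum_const, nsmul_eq_mul]
      _ ≤ ∑ i ∈ T, (lam i)^2 := by
          refine Finset.sum_le_sum fun i hi => ?_
          have hi' : (1:ℝ)/2 < lam i := (Finset.mem_filter.mp hi).2
          have : ((1:ℝ)/2)^2 ≤ (lam i)^2 := pow_le_pow_left₀ (by norm_num) hi'.le 2
          linarith [this]
      _ ≤ ∑ i : Fin (Fintype.card V), (lam i)^2 :=
          Finset.sum_le_sum_of_subset_of_nonneg (Finset.subset_univ T)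
            (fun i _ _ => sq_nonneg _)
  have hfinal : (T.card : ℝ) * (1/4) ≤ 1 / δ := by
    rw [← htrace] at hquarter
    exact hquarter.trans part2
  rw [hcard]
  calc (T.card : ℝ) ≤ 4 * (1/δ) := by linarith
    _ = 4 / δ := by ring


end Paper
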